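/- arXiv:1805.10251 — 4 statements merged into one kernel-verified Lean document; each statement's English description precedes it below -/
import Mathlib

section
/- Define f : ℝ² → ℝ by f(x) = ‖A(xxᵀ − Z)‖², where Z = [[1,0],[0,0]] and A is as above. Then at the point x₀ = (0, 1/√2): f(x₀) = 3/2, the gradient of f vanishes at x₀, and the Hessian of f at x₀ equals [[0,0],[0,8]], which is positive semidefinite. -/
noncomputable def A1 : Matrix (Fin 2) (Fin 2) ℝ := !![Real.sqrt 2, 0; 0, 1 / Real.sqrt 2]
noncomputable def A2 : Matrix (Fin 2) (Fin 2) ℝ := !![0, Real.sqrt (3/2); Real.sqrt (3/2), 0]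
noncomputable def A3 : Matrix (Fin 2) (Fin 2) ℝ := !![0, 0; 0, Real.sqrt (3/2)]

def Zmat : Matrix (Fin 2) (Fin 2) ℝ := !![1, 0; 0, 0]

/-- Frobenius inner product -/
def frobInner (M X : Matrix (Fin 2) (Fin 2) ℝ) : ℝ := ∑ i, ∑ j, M i j * X i j

/-- outer product xxᵀ -/
def outer (x : Fin 2 → ℝ) : Matrix (Fin 2) (Fin 2) ℝ := Matrix.of fun i j => x i * x j

/-- f(x) = ‖A(xxᵀ − Z)‖² -/
noncomputable def f (x : Fin 2 → ℝ) : ℝ :=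
  (frobInner A1 (outer x - Zmat)) ^ 2 + (frobInner A2 (outer x - Zmat)) ^ 2 +
    (frobInner A3 (outer x - Zmat)) ^ 2

noncomputable def x0 : Fin 2 → ℝ := ![0, 1 / Real.sqrt 2]

/-- f is a polynomial. -/
lemma f_eq : f = fun x : Fin 2 → ℝ =>
    2*((x 0*x 0 - 1)*(x 0*x 0 - 1)) + 2*((x 0*x 0 - 1)*(x 1*x 1)) + 2*((x 1*x 1)*(x 1*x 1))
      + 6*((x 0*x 0)*(x 1*x 1)) := by
  have e2 : Real.sqrt 2 ^ 2 = 2 := Real.sq_sqrt (by norm_num)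
  have e4 : Real.sqrt 2 ^ 4 = 4 := by nlinarith [e2]
  have e3 : Real.sqrt 3 ^ 2 = 3 := Real.sq_sqrt (by norm_num)
  have hne : Real.sqrt 2 ≠ 0 := by positivity
  funext x
  simp [f, frobInner, A1, A2, A3, Zmat, outer, Fin.sum_univ_two]
  field_simp
  ring_nf
  simp only [e2, e3, e4]
  ring

lemma quartic_hasDeriv (a b c d e t : ℝ) :
    HasDerivAt (fun t : ℝ => a + b*t + c*t^2 + d*t^3 + e*t^4)
      (b + 2*c*t + 3*d*t^2 + 4*e*t^3) t := by
  have h := (((((hasDerivAt_pow 1 t).const_mul b).add ((hasDerivAt_pow 2 t).const_mul c)).add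
      ((hasDerivAt_pow 3 t).const_mul d)).add ((hasDerivAt_pow 4 t).const_mul e)).const_add a
  convert h using 2 <;> (try rfl) <;> (try simp only [Pi.add_apply]) <;> ring

theorem stmt1 :
    f x0 = 3 / 2 ∧
    fderiv ℝ f x0 = 0 ∧
    (∀ u : Fin 2 → ℝ,
      deriv (deriv fun t : ℝ => f (x0 + t • u)) 0 =
        ∑ i, ∑ j, u i * (!![0, 0; 0, 8] : Matrix (Fin 2) (Fin 2) ℝ) i j * u j) ∧
    (!![(0:ℝ), 0; 0, 8] : Matrix (Fin 2) (Fin 2) ℝ).PosSemidef := by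
  have hc2 : (1 / Real.sqrt 2) ^ 2 = 1 / 2 := by
    rw [div_pow, one_pow, Real.sq_sqrt (by norm_num : (0:ℝ) ≤ 2)]
  set c : ℝ := 1 / Real.sqrt 2 with hc
  refine ⟨?_, ?_, ?_, ?_⟩
  · rw [f_eq]
    simp only [x0, Matrix.cons_val_zero, Matrix.cons_val_one, Matrix.head_cons]
    nlinarith [hc2]
  · rw [f_eq]
    have h0 : HasFDerivAt (fun x : Fin 2 → ℝ => x 0)
        (ContinuousLinearMap.proj 0 : (Fin 2 → ℝ) →L[ℝ] ℝ) x0 := hasFDerivAt_apply 0 x0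
    have h1 : HasFDerivAt (fun x : Fin 2 → ℝ => x 1)
        (ContinuousLinearMap.proj 1 : (Fin 2 → ℝ) →L[ℝ] ℝ) x0 := hasFDerivAt_apply 1 x0
    have q0 := (h0.mul h0).sub_const 1
    have q1 := h1.mul h1
    have hg := ((((q0.mul q0).const_mul 2).add ((q0.mul q1).const_mul 2)).add
        ((q1.mul q1).const_mul 2)).add (((h0.mul h0).mul q1).const_mul 6)
    have hg' : HasFDerivAt (fun x : Fin 2 → ℝ =>
        2*((x 0*x 0 - 1)*(x 0*x 0 - 1)) + 2*((x 0*x 0 - 1)*(x 1*x 1)) + 2*((x 1*x 1)*(x 1*x 1))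
          + 6*((x 0*x 0)*(x 1*x 1))) _ x0 := hg
    rw [hg'.fderiv]
    ext v
    have e2 : Real.sqrt 2 ^ 2 = 2 := Real.sq_sqrt (by norm_num)
    have hne : Real.sqrt 2 ≠ 0 := by positivity
    simp [x0, ContinuousLinearMap.proj_apply]
    field_simp
    ring_nf
    simp [e2]
    ring
  · intro u
    rw [f_eq]
    set u0 := u 0
    set u1 := u 1
    set C0 := 2 - 2*c^2 + 2*c^4 with hC0
    set C1 := -4*c*u1 + 8*c^3*u1 with hC1
    set C2 := -4*u0^2 + 8*u0^2*c^2 - 2*u1^2 + 12*c^2*u1^2 with hC2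
    set C3 := 16*u0^2*c*u1 + 8*c*u1^3 with hC3
    set C4 := 2*u0^4 + 8*u0^2*u1^2 + 2*u1^4 with hC4
    have hcoord0 : ∀ t : ℝ, (x0 + t • u) 0 = t * u0 := by
      intro t; simp [x0, mul_comm, u0]
    have hcoord1 : ∀ t : ℝ, (x0 + t • u) 1 = c + t * u1 := by
      intro t; simp [x0, hc, mul_comm, u1]
    have hpoly : (fun t : ℝ =>
        2*(((x0+t•u) 0*(x0+t•u) 0 - 1)*((x0+t•u) 0*(x0+t•u) 0 - 1))
          + 2*(((x0+t•u) 0*(x0+t•u) 0 - 1)*((x0+t•u) 1*(x0+t•u) 1))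
          + 2*(((x0+t•u) 1*(x0+t•u) 1)*((x0+t•u) 1*(x0+t•u) 1))
          + 6*(((x0+t•u) 0*(x0+t•u) 0)*((x0+t•u) 1*(x0+t•u) 1)))
        = fun t => C0 + C1*t + C2*t^2 + C3*t^3 + C4*t^4 := by
      funext t
      simp only [hcoord0, hcoord1, hC0, hC1, hC2, hC3, hC4]
      ring
    rw [hpoly]
    have hd1 : deriv (fun t : ℝ => C0 + C1*t + C2*t^2 + C3*t^3 + C4*t^4)
        = fun t => C1 + (2*C2)*t + (3*C3)*t^2 + (4*C4)*t^3 + 0*t^4 := by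
      funext t
      rw [(quartic_hasDeriv C0 C1 C2 C3 C4 t).deriv]
      ring
    rw [hd1, (quartic_hasDeriv C1 (2*C2) (3*C3) (4*C4) 0 0).deriv]
    simp [Fin.sum_univ_two, hC2]
    linear_combination (16*u0^2 + 24*u1^2) * hc2
  · rw [Matrix.posSemidef_iff_dotProduct_mulVec]
    constructor
    · ext i j; fin_cases i <;> fin_cases j <;> rfl
    · intro x
      have h := mul_self_nonneg (x 1)
      simp [dotProduct, Matrix.mulVec, Fin.sum_univ_two]
      nlinarith [h]
end

section
/- Let M be a symmetric n×n matrix with tr(M) ≥ 0, and write M = M₊ − M₋ where M₊, M₋ are positive semidefinite with M₊M₋ = 0 (the positive and negative parts from the spectral decomposition). Then the minimum of tr(V) over all real α and positive semidefinite matrices U, V satisfying tr(U) = 1 and αM = U − V equals tr(M₋)/tr(M₊). -/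
open Matrix

lemma trace_mul_self_transpose_nonneg {n : ℕ} (C : Matrix (Fin n) (Fin n) ℝ) :
    0 ≤ (C * Cᵀ).trace := by
  simp only [Matrix.trace, Matrix.diag, Matrix.mul_apply, Matrix.transpose_apply]
  refine Finset.sum_nonneg fun i _ => Finset.sum_nonneg fun j _ => mul_self_nonneg _

open scoped MatrixOrder Matrix.Norms.L2Operator in
lemma trace_mul_nonneg {n : ℕ} {A B : Matrix (Fin n) (Fin n) ℝ}
    (hA : A.PosSemidef) (hB : B.PosSemidef) : 0 ≤ (A * B).trace := by
  obtain ⟨S, rfl⟩ := CStarAlgebra.nonneg_iff_eq_star_mul_self.mp hA.nonneg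
  obtain ⟨T, rfl⟩ := CStarAlgebra.nonneg_iff_eq_star_mul_self.mp hB.nonneg
  have key : (star S * S * (star T * T)).trace = ((S * star T) * (S * star T)ᵀ).trace := by
    simp only [star_eq_conjTranspose, conjTranspose_eq_transpose_of_trivial, transpose_mul,
      transpose_transpose]
    rw [show Sᵀ * S * (Tᵀ * T) = Sᵀ * (S * Tᵀ * T) by noncomm_ring, Matrix.trace_mul_comm]
    simp only [mul_assoc]
  rw [key]
  exact trace_mul_self_transpose_nonneg _

lemma posSemidef_smul_nonneg {n : ℕ} {A : Matrix (Fin n) (Fin n) ℝ}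
    (hA : A.PosSemidef) {c : ℝ} (hc : 0 ≤ c) : (c • A).PosSemidef := by
  refine ⟨?_, fun x => ?_⟩
  · unfold Matrix.IsHermitian
    rw [Matrix.conjTranspose_smul, hA.1.eq]
    simp
  · exact (hA.smul hc).2 x

theorem stmt4 {n : ℕ} (M Mp Mm : Matrix (Fin n) (Fin n) ℝ)
    (hM : M.IsSymm) (htr : 0 ≤ M.trace)
    (hp : Mp.PosSemidef) (hm : Mm.PosSemidef)
    (hdec : M = Mp - Mm) (hortho : Mp * Mm = 0)
    (hptr : 0 < Mp.trace) :
    IsLeast {t : ℝ | ∃ (α : ℝ) (U V : Matrix (Fin n) (Fin n) ℝ),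
        U.PosSemidef ∧ V.PosSemidef ∧ U.trace = 1 ∧ α • M = U - V ∧ t = V.trace}
      (Mm.trace / Mp.trace) := by
  set tp := Mp.trace with htp
  set tm := Mm.trace with htm
  have htpne : tp ≠ 0 := ne_of_gt hptr
  constructor
  · -- membership
    refine ⟨tp⁻¹, tp⁻¹ • Mp, tp⁻¹ • Mm,
      posSemidef_smul_nonneg hp (by positivity),
      posSemidef_smul_nonneg hm (by positivity), ?_, ?_, ?_⟩
    · rw [Matrix.trace_smul, smul_eq_mul, inv_mul_cancel₀ htpne]
    · rw [hdec, smul_sub]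
    · rw [Matrix.trace_smul, smul_eq_mul, div_eq_inv_mul]
  · -- lower bound
    rintro t ⟨α, U, V, hU, hV, hUtr, hUV, rfl⟩
    -- build the projection onto range of Mp
    have hH : Mp.IsHermitian := hp.1
    set W : Matrix (Fin n) (Fin n) ℝ := (hH.eigenvectorUnitary : Matrix (Fin n) (Fin n) ℝ)
      with hW
    have hWW : W * star W = 1 := (Matrix.mem_unitaryGroup_iff).mp hH.eigenvectorUnitary.2
    have hWW' : star W * W = 1 := (Matrix.mem_unitaryGroup_iff').mp hH.eigenvectorUnitary.2
    set d : Fin n → ℝ := hH.eigenvalues with hd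
    set χ : Fin n → ℝ := fun i => if d i = 0 then 0 else 1 with hχ
    set P : Matrix (Fin n) (Fin n) ℝ := W * Matrix.diagonal χ * star W with hPdef
    have hspec : Mp = W * Matrix.diagonal d * star W := by
      have := hH.spectral_theorem
      simpa using this
    have hstar : (star W : Matrix (Fin n) (Fin n) ℝ) = Wᴴ := rfl
    have hP : P.PosSemidef := by
      rw [hPdef, hstar]
      exact (Matrix.posSemidef_diagonal_iff.mpr fun i => by
        simp only [hχ]; split <;> norm_num).mul_mul_conjTranspose_same W
    have h1P : (1 - P).PosSemidef := by
      have : (1 : Matrix (Fin n) (Fin n) ℝ) - P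
          = W * Matrix.diagonal (fun i => 1 - χ i) * star W := by
        rw [hPdef]
        have h1 : (1 : Matrix (Fin n) (Fin n) ℝ) = W * 1 * star W := by
          rw [mul_one, hWW]
        rw [show (Matrix.diagonal fun i => 1 - χ i)
            = 1 - Matrix.diagonal χ by rw [← Matrix.diagonal_one, Matrix.diagonal_sub]]
        rw [Matrix.mul_sub, Matrix.sub_mul, ← h1]
      rw [this, hstar]
      exact (Matrix.posSemidef_diagonal_iff.mpr fun i => by
        simp only [hχ]; split <;> norm_num).mul_mul_conjTranspose_same W
    have hPMp : P * Mp = Mp := by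
      rw [hPdef, hspec]
      rw [show W * Matrix.diagonal χ * star W * (W * Matrix.diagonal d * star W)
          = W * (Matrix.diagonal χ * (star W * W) * Matrix.diagonal d) * star W by
          noncomm_ring]
      rw [hWW', mul_one, Matrix.diagonal_mul_diagonal]
      have hfd : (fun i => χ i * d i) = d := by
        funext i; by_cases h : d i = 0 <;> simp [hχ, h]
      rw [hfd]
    have hPMm : P * Mm = 0 := by
      have h0 : Matrix.diagonal d * (star W * Mm) = 0 := by
        have : star W * (Mp * Mm) = 0 := by rw [hortho, Matrix.mul_zero]
        rw [hspec] at this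
        rw [show star W * (W * Matrix.diagonal d * star W * Mm)
            = (star W * W) * (Matrix.diagonal d * (star W * Mm)) by noncomm_ring] at this
        rwa [hWW', one_mul] at this
      have h0' : Matrix.diagonal χ * (star W * Mm) = 0 := by
        funext i j
        have := congrFun (congrFun h0 i) j
        simp only [Matrix.diagonal_mul, Matrix.zero_apply] at this ⊢
        simp only [hχ]
        split
        · simp
        · next h =>
            rw [one_mul]
            exact (mul_eq_zero.mp this).resolve_left h
      rw [hPdef, show W * Matrix.diagonal χ * star W * Mm
          = W * (Matrix.diagonal χ * (star W * Mm)) by noncomm_ring, h0',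
        Matrix.mul_zero]
    -- trace identities
    have htrUV : α * M.trace = 1 - V.trace := by
      have := congrArg Matrix.trace hUV
      rwa [Matrix.trace_smul, Matrix.trace_sub, hUtr, smul_eq_mul] at this
    have hMtr : M.trace = tp - tm := by rw [hdec, Matrix.trace_sub]
    have hPU : (P * U).trace ≤ 1 := by
      have h1 : 0 ≤ ((1 - P) * U).trace := trace_mul_nonneg h1P hU
      rw [Matrix.sub_mul, Matrix.one_mul, Matrix.trace_sub] at h1
      linarith [hUtr ▸ h1]
    have hPV : 0 ≤ (P * V).trace := trace_mul_nonneg hP hV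
    have hαtp : α * tp ≤ 1 := by
      have h1 : P * (α • M) = P * U - P * V := by rw [hUV, Matrix.mul_sub]
      have h2 : P * (α • M) = α • Mp := by
        rw [Matrix.mul_smul, hdec, Matrix.mul_sub, hPMp, hPMm, sub_zero]
      have h3 := congrArg Matrix.trace (h2 ▸ h1)
      rw [Matrix.trace_smul, Matrix.trace_sub, smul_eq_mul] at h3
      rw [← htp] at h3
      linarith
    -- conclude
    have htm : 0 ≤ tm := by
      have := trace_mul_nonneg hm (Matrix.PosSemidef.one)
      rwa [Matrix.mul_one] at this
    have htrM : 0 ≤ tp - tm := hMtr ▸ htr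
    rw [hMtr] at htrUV
    rw [div_le_iff₀ hptr]
    nlinarith [mul_nonneg (sub_nonneg.mpr hαtp) htrM]
end

section
/- Let x, z ∈ ℝⁿ be nonzero with x not parallel to z, and let e = xxᵀ − zzᵀ. Then the minimum of ‖xyᵀ + yxᵀ − e‖_F over y ∈ ℝⁿ equals ‖z‖² sin²φ, where φ is the angle between x and z (cos φ = xᵀz/(‖x‖‖z‖)). -/
/-- Frobenius norm of an n×n real matrix. -/
noncomputable def frobNorm {n : ℕ} (M : Matrix (Fin n) (Fin n) ℝ) : ℝ :=
  Real.sqrt (∑ i, ∑ j, (M i j) ^ 2)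

theorem stmt7 {n : ℕ} (x z : EuclideanSpace ℝ (Fin n))
    (hx : x ≠ 0) (hz : z ≠ 0) (hnp : ∀ c : ℝ, z ≠ c • x)
    (e : Matrix (Fin n) (Fin n) ℝ)
    (he : e = Matrix.of fun i j => x i * x j - z i * z j) :
    IsLeast {t : ℝ | ∃ y : EuclideanSpace ℝ (Fin n),
        t = frobNorm (Matrix.of (fun i j => x i * y j + y i * x j) - e)}
      (‖z‖ ^ 2 * Real.sin (InnerProductGeometry.angle x z) ^ 2) := by
  classical
  set P : ℝ := ∑ i, x i ^ 2 with hPdef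
  set Q : ℝ := ∑ i, z i ^ 2 with hQdef
  set c : ℝ := ∑ i, x i * z i with hcdef
  have hP : 0 < P := by
    rcases (Finset.sum_nonneg fun i _ => sq_nonneg (x i)).lt_or_eq with h | h
    · exact h
    · exfalso; apply hx
      have h0 := (Finset.sum_eq_zero_iff_of_nonneg (fun i _ => sq_nonneg (x i))).1 h.symm
      ext i
      simpa using pow_eq_zero_iff (n := 2) (by norm_num) |>.1 (h0 i (Finset.mem_univ i))
  have hQ : 0 < Q := by
    rcases (Finset.sum_nonneg fun i _ => sq_nonneg (z i)).lt_or_eq with h | h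
    · exact h
    · exfalso; apply hz
      have h0 := (Finset.sum_eq_zero_iff_of_nonneg (fun i _ => sq_nonneg (z i))).1 h.symm
      ext i
      simpa using pow_eq_zero_iff (n := 2) (by norm_num) |>.1 (h0 i (Finset.mem_univ i))
  set α : ℝ := c / P with hαdef
  set w : Fin n → ℝ := fun i => z i - α * x i with hwdef
  set S : ℝ := ∑ i, w i ^ 2 with hSdef
  -- orthogonality : ∑ x i * w i = 0
  have hxw : ∑ i, x i * w i = 0 := by
    have h1 : ∀ i ∈ Finset.univ, x i * w i = x i * z i - α * x i ^ 2 := fun i _ => by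
      simp only [hwdef]; ring
    rw [Finset.sum_congr rfl h1, Finset.sum_sub_distrib, ← Finset.mul_sum, ← hcdef, ← hPdef,
      hαdef, div_mul_cancel₀ _ hP.ne', sub_self]
  -- ∑ z i * w i = S
  have hzw : ∑ i, z i * w i = S := by
    have h1 : ∀ i ∈ Finset.univ, w i ^ 2 = z i * w i - α * (x i * w i) := fun i _ => by
      simp only [hwdef]; ring
    rw [hSdef, Finset.sum_congr rfl h1, Finset.sum_sub_distrib, ← Finset.mul_sum, hxw,
      mul_zero, sub_zero]
  -- S > 0
  have hS : 0 < S := by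
    rcases (Finset.sum_nonneg fun i _ => sq_nonneg (w i)).lt_or_eq with h | h
    · exact h
    · exfalso; apply hnp α
      have h0 := (Finset.sum_eq_zero_iff_of_nonneg (fun i _ => sq_nonneg (w i))).1 h.symm
      ext i
      have h2 := pow_eq_zero_iff (n := 2) (by norm_num) |>.1 (h0 i (Finset.mem_univ i))
      have h3 : z i = α * x i := by
        have : z i - α * x i = 0 := h2
        linarith
      simpa using h3
  -- norms
  have hnx : ‖x‖ ^ 2 = P := by
    rw [EuclideanSpace.norm_sq_eq]; simp [hPdef]
  have hnz : ‖z‖ ^ 2 = Q := by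
    rw [EuclideanSpace.norm_sq_eq]; simp [hQdef]
  have hinner : (inner ℝ x z : ℝ) = c := by
    simp [PiLp.inner_apply, RCLike.inner_apply, hcdef, mul_comm]
  have hx0 : ‖x‖ ≠ 0 := norm_ne_zero_iff.mpr hx
  have hz0 : ‖z‖ ≠ 0 := norm_ne_zero_iff.mpr hz
  -- S in terms of P, Q, c
  have hSval : S = Q - c ^ 2 / P := by
    have h1 : ∀ i ∈ Finset.univ, w i ^ 2
        = z i ^ 2 - 2 * α * (x i * z i) + α ^ 2 * x i ^ 2 := fun i _ => by
      simp only [hwdef]; ring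
    rw [hSdef, Finset.sum_congr rfl h1, Finset.sum_add_distrib, Finset.sum_sub_distrib,
      ← Finset.mul_sum, ← Finset.mul_sum, ← hcdef, ← hPdef, ← hQdef, hαdef]
    field_simp
    ring
  -- the target value equals S
  have hval : ‖z‖ ^ 2 * Real.sin (InnerProductGeometry.angle x z) ^ 2 = S := by
    have hcos : Real.cos (InnerProductGeometry.angle x z) = c / (‖x‖ * ‖z‖) := by
      rw [InnerProductGeometry.cos_angle, hinner]
    have hsin : Real.sin (InnerProductGeometry.angle x z) ^ 2
        = 1 - (c / (‖x‖ * ‖z‖)) ^ 2 := by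
      rw [Real.sin_sq, hcos]
    rw [hsin, hSval, div_pow, mul_pow, hnx, hnz]
    field_simp
  -- sum of squares of the rank-one matrix w wᵀ
  have hsq : ∑ i, ∑ j, (w i * w j) ^ 2 = S ^ 2 := by
    have : S ^ 2 = S * S := sq S
    rw [this, hSdef, Finset.sum_mul_sum]
    exact Finset.sum_congr rfl fun i _ => Finset.sum_congr rfl fun j _ => mul_pow _ _ 2
  rw [hval]
  constructor
  · -- membership : the minimizer
    set y0 : EuclideanSpace ℝ (Fin n) :=
      WithLp.toLp 2 (fun i => (1 - α ^ 2) / 2 * x i - α * w i : Fin n → ℝ) with hy0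
    refine ⟨y0, ?_⟩
    have hM0 : (Matrix.of (fun i j => x i * y0 j + y0 i * x j) - e)
        = Matrix.of (fun i j => w i * w j) := by
      ext i j
      simp only [he, Matrix.sub_apply, Matrix.of_apply, hy0, PiLp.toLp_apply, hwdef]
      ring
    rw [hM0]
    unfold frobNorm
    simp only [Matrix.of_apply]
    rw [hsq, Real.sqrt_sq hS.le]
  · -- lower bound
    rintro t ⟨y, rfl⟩
    set M : Matrix (Fin n) (Fin n) ℝ :=
      Matrix.of (fun i j => x i * y j + y i * x j) - e with hMdef
    have hMent : ∀ i j, M i j = x i * y j + y i * x j - (x i * x j - z i * z j) := by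
      intro i j
      simp [hMdef, he]
    set d : ℝ := ∑ j, w j * y j with hddef
    have hrow : ∀ i, ∑ j, (w i * w j) * M i j
        = (x i * w i) * d + (z i * w i) * S := by
      intro i
      have h1 : ∀ j ∈ Finset.univ, (w i * w j) * M i j
          = (x i * w i) * (w j * y j) + (w i * y i) * (x j * w j)
            - (x i * w i) * (x j * w j) + (z i * w i) * (z j * w j) := fun j _ => by
        rw [hMent]; ring
      rw [Finset.sum_congr rfl h1, Finset.sum_add_distrib, Finset.sum_sub_distrib,
        Finset.sum_add_distrib, ← Finset.mul_sum, ← Finset.mul_sum, ← Finset.mul_sum,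
        ← Finset.mul_sum, ← hddef]
      have hxw2 : ∑ j, x j * w j = 0 := hxw
      have hzw2 : ∑ j, z j * w j = S := hzw
      rw [hxw2, hzw2]
      ring
    have hT : ∑ i, ∑ j, (w i * w j) * M i j = S ^ 2 := by
      rw [Finset.sum_congr rfl fun i _ => hrow i, Finset.sum_add_distrib,
        ← Finset.sum_mul, ← Finset.sum_mul, hxw, hzw]
      ring
    have hcs : (∑ i, ∑ j, (w i * w j) * M i j) ^ 2
        ≤ (∑ i, ∑ j, (w i * w j) ^ 2) * (∑ i, ∑ j, (M i j) ^ 2) := by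
      have h := Finset.sum_mul_sq_le_sq_mul_sq Finset.univ
        (fun p : Fin n × Fin n => w p.1 * w p.2) (fun p : Fin n × Fin n => M p.1 p.2)
      simpa [Fintype.sum_prod_type] using h
    rw [hT, hsq] at hcs
    have hMsq : S ^ 2 ≤ ∑ i, ∑ j, (M i j) ^ 2 := by
      have h2 : S ^ 2 * S ^ 2 ≤ S ^ 2 * ∑ i, ∑ j, (M i j) ^ 2 := by nlinarith [hcs]
      exact le_of_mul_le_mul_left h2 (pow_pos hS 2)
    calc S = Real.sqrt (S ^ 2) := (Real.sqrt_sq hS.le).symm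
      _ ≤ frobNorm M := Real.sqrt_le_sqrt hMsq
end

section
/- Let x, z ∈ ℝⁿ be nonzero, set ρ = ‖x‖/‖z‖, let φ be the angle between x and z, and let e = xxᵀ − zzᵀ ≠ 0. Define sin θ as the sine of the angle between e and the subspace {xyᵀ + yxᵀ : y ∈ ℝⁿ} in Frobenius norm (i.e., ‖e‖ sin θ = min_y ‖xyᵀ + yxᵀ − e‖_F). Then sin θ = sin²φ / √((ρ² − 1)² + 2ρ² sin²φ). -/
namespace Stmt8Aux
variable {n : ℕ}

lemma sum_quad (x z w : Fin n → ℝ) (a b c : ℝ) :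
    ∑ j, (a * w j + b * x j + c * z j)^2 =
      a^2*(∑ j, w j^2) + b^2*(∑ j, x j^2) + c^2*(∑ j, z j^2)
      + 2*a*b*(∑ j, x j * w j) + 2*a*c*(∑ j, w j * z j) + 2*b*c*(∑ j, x j * z j) := by
  simp only [Finset.mul_sum, ← Finset.sum_add_distrib]
  exact Finset.sum_congr rfl fun j _ => by ring

lemma sum_lin (x z w : Fin n → ℝ) (a b c : ℝ) :
    ∑ j, x j * (a * w j + b * x j + c * z j) =
      a*(∑ j, x j * w j) + b*(∑ j, x j^2) + c*(∑ j, x j * z j) := by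
  simp only [Finset.mul_sum, ← Finset.sum_add_distrib]
  exact Finset.sum_congr rfl fun j _ => by ring

lemma sum_expand (x z w : Fin n → ℝ) (c1 c2 c3 c4 c5 c6 : ℝ) :
    ∑ i, (c1*(x i)^2 + c2*(w i)^2 + c3*(z i)^2 + c4*(x i * w i) + c5*(x i * z i) + c6*(w i * z i))
      = c1*(∑ j, x j^2) + c2*(∑ j, w j^2) + c3*(∑ j, z j^2)
        + c4*(∑ j, x j * w j) + c5*(∑ j, x j * z j) + c6*(∑ j, w j * z j) := by
  simp only [Finset.mul_sum, ← Finset.sum_add_distrib]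

lemma enorm_sq (x z : Fin n → ℝ) :
    ∑ i, ∑ j, (x i * x j - z i * z j)^2
      = (∑ j, x j^2)^2 + (∑ j, z j^2)^2 - 2*(∑ j, x j * z j)^2 := by
  have per_i : ∀ i, ∑ j, (x i * x j - z i * z j)^2
      = (∑ j, x j^2)*(x i)^2 + (∑ j, z j^2)*(z i)^2 + (-2*(∑ j, x j * z j))*(x i * z i) := by
    intro i
    have : ∀ j, (x i * x j - z i * z j)^2 = ((0:ℝ) * x j + (x i) * x j + (-z i) * z j)^2 :=
      fun j => by ring
    rw [Finset.sum_congr rfl fun j _ => this j, sum_quad]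
    ring
  rw [Finset.sum_congr rfl fun i _ => per_i i]
  rw [Finset.sum_add_distrib, Finset.sum_add_distrib, ← Finset.mul_sum, ← Finset.mul_sum,
    ← Finset.mul_sum]
  ring

lemma key_identity (x z y : Fin n → ℝ) (hA : (∑ j, x j^2) ≠ 0) :
    ∑ i, ∑ j, (x i * y j + y i * x j - (x i * x j - z i * z j))^2 =
      2*(∑ j, x j^2)*(∑ i, (y i - (1/2 + (∑ j, x j * z j)^2/(2*(∑ j, x j^2)^2)) * x i
            + ((∑ j, x j * z j)/(∑ j, x j^2)) * z i)^2)
      + 2*(∑ i, x i * (y i - (1/2 + (∑ j, x j * z j)^2/(2*(∑ j, x j^2)^2)) * x i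
            + ((∑ j, x j * z j)/(∑ j, x j^2)) * z i))^2
      + ((∑ j, z j^2) - (∑ j, x j * z j)^2/(∑ j, x j^2))^2 := by
  set A := ∑ j, x j^2 with hAdef
  set B := ∑ j, z j^2 with hBdef
  set C := ∑ j, x j * z j with hCdef
  set Y := ∑ j, y j^2 with hYdef
  set S := ∑ j, x j * y j with hSdef
  set D := ∑ j, y j * z j with hDdef
  set p : ℝ := 1/2 + C^2/(2*A^2) with hp
  set r : ℝ := C/A with hr
  have lhs1 : ∀ i, ∑ j, (x i * y j + y i * x j - (x i * x j - z i * z j))^2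
      = (Y + A - 2*S)*(x i)^2 + A*(y i)^2 + B*(z i)^2 + (2*S - 2*A)*(x i * y i)
        + (2*D - 2*C)*(x i * z i) + (2*C)*(y i * z i) := by
    intro i
    have : ∀ j, (x i * y j + y i * x j - (x i * x j - z i * z j))^2
        = ((x i) * y j + (y i - x i) * x j + (z i) * z j)^2 := fun j => by ring
    rw [Finset.sum_congr rfl fun j _ => this j, sum_quad]
    ring
  have lhs2 : ∑ i, ∑ j, (x i * y j + y i * x j - (x i * x j - z i * z j))^2
      = (Y + A - 2*S)*A + A*Y + B*B + (2*S - 2*A)*S + (2*D - 2*C)*C + (2*C)*D := by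
    rw [Finset.sum_congr rfl fun i _ => lhs1 i, sum_expand]
  have rhs1 : (∑ i, (y i - p * x i + r * z i)^2) = Y + p^2*A + r^2*B - 2*p*S + 2*r*D - 2*p*r*C := by
    have : ∀ i, (y i - p * x i + r * z i)^2 = (1 * y i + (-p) * x i + r * z i)^2 := fun i => by ring
    rw [Finset.sum_congr rfl fun i _ => this i, sum_quad]
    ring
  have rhs2 : (∑ i, x i * (y i - p * x i + r * z i)) = S - p*A + r*C := by
    have : ∀ i, x i * (y i - p * x i + r * z i) = x i * (1 * y i + (-p) * x i + r * z i) :=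
      fun i => by ring
    rw [Finset.sum_congr rfl fun i _ => this i, sum_lin]
    ring
  rw [lhs2, rhs1, rhs2, hp, hr]
  field_simp
  ring

end Stmt8Aux

set_option maxHeartbeats 1000000 in
theorem stmt8 {n : ℕ} (x z : EuclideanSpace ℝ (Fin n))
    (hx : x ≠ 0) (hz : z ≠ 0)
    (ρ : ℝ) (hρ : ρ = ‖x‖ / ‖z‖)
    (φ : ℝ) (hφ : φ = InnerProductGeometry.angle x z)
    (e : Matrix (Fin n) (Fin n) ℝ)
    (he : e = Matrix.of fun i j => x i * x j - z i * z j) (hene : e ≠ 0)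
    (sinθ : ℝ) (hθ0 : 0 ≤ sinθ)
    (hθ : IsLeast {t : ℝ | ∃ y : EuclideanSpace ℝ (Fin n),
        t = frobNorm (Matrix.of (fun i j => x i * y j + y i * x j) - e)}
      (frobNorm e * sinθ)) :
    sinθ = Real.sin φ ^ 2 /
      Real.sqrt ((ρ ^ 2 - 1) ^ 2 + 2 * ρ ^ 2 * Real.sin φ ^ 2) := by
  classical
  set A := ∑ j, x j ^ 2 with hAdef
  set B := ∑ j, z j ^ 2 with hBdef
  set C := ∑ j, x j * z j with hCdef
  have hxA : ‖x‖ ^ 2 = A := by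
    rw [EuclideanSpace.norm_eq, Real.sq_sqrt (by positivity)]
    simp [sq_abs]
    exact hAdef.symm
  have hzB : ‖z‖ ^ 2 = B := by
    rw [EuclideanSpace.norm_eq, Real.sq_sqrt (by positivity)]
    simp [sq_abs]
    exact hBdef.symm
  have hCinner : (inner ℝ x z : ℝ) = C := by
    simp [PiLp.inner_apply, hCdef, mul_comm]
  have hxpos : (0:ℝ) < ‖x‖ := norm_pos_iff.mpr hx
  have hzpos : (0:ℝ) < ‖z‖ := norm_pos_iff.mpr hz
  have hApos : 0 < A := by rw [← hxA]; positivity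
  have hBpos : 0 < B := by rw [← hzB]; positivity
  have hCS : C^2 ≤ A * B := by
    have h := abs_real_inner_le_norm x z
    rw [hCinner] at h
    have h2 : C^2 ≤ (‖x‖ * ‖z‖)^2 := by
      rw [← sq_abs]
      exact pow_le_pow_left₀ (abs_nonneg C) h 2
    rwa [mul_pow, hxA, hzB] at h2
  set m : ℝ := B - C^2/A with hm
  have hm0 : 0 ≤ m := by
    rw [hm, sub_nonneg, div_le_iff₀ hApos]
    linarith [hCS]
  -- the value of frobNorm for each y
  have hval : ∀ y : EuclideanSpace ℝ (Fin n),
      frobNorm (Matrix.of (fun i j => x i * y j + y i * x j) - e)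
        = Real.sqrt (∑ i, ∑ j, (x i * y j + y i * x j - (x i * x j - z i * z j))^2) := by
    intro y
    simp [frobNorm, he, Matrix.sub_apply]
  -- IsLeast m for the set
  have hleast : IsLeast {t : ℝ | ∃ y : EuclideanSpace ℝ (Fin n),
      t = frobNorm (Matrix.of (fun i j => x i * y j + y i * x j) - e)} m := by
    constructor
    · refine ⟨WithLp.toLp 2 (fun i => (1/2 + C^2/(2*A^2)) * x i - (C/A) * z i : Fin n → ℝ), ?_⟩
      rw [hval, Stmt8Aux.key_identity x z _ (ne_of_gt hApos)]
      rw [← hAdef, ← hCdef, ← hBdef]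
      have hz1 : ∀ i : Fin n,
          ((fun i => (1/2 + C^2/(2*A^2)) * x i - (C/A) * z i : Fin n → ℝ) i
            - (1/2 + C^2/(2*A^2)) * x i + (C/A) * z i) = 0 := fun i => by simp
      simp only [hz1]
      have hrad : (2*A)*(∑ _i : Fin n, (0:ℝ)^2) + 2*(∑ _i : Fin n, x _i * (0:ℝ))^2
          + (B - C^2/A)^2 = m^2 := by simp [hm]
      rw [hrad, Real.sqrt_sq hm0]
    · rintro t ⟨y, rfl⟩
      rw [hval, Stmt8Aux.key_identity x z _ (ne_of_gt hApos)]
      have h1 : m^2 ≤ 2*A*(∑ i, (y i - (1/2 + C^2/(2*A^2)) * x i + (C/A) * z i)^2)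
          + 2*(∑ i, x i * (y i - (1/2 + C^2/(2*A^2)) * x i + (C/A) * z i))^2 + (B - C^2/A)^2 := by
        have t1 : 0 ≤ ∑ i, (y i - (1/2 + C^2/(2*A^2)) * x i + (C/A) * z i)^2 := by positivity
        have t2 : 0 ≤ (∑ i, x i * (y i - (1/2 + C^2/(2*A^2)) * x i + (C/A) * z i))^2 := by
          positivity
        nlinarith [hApos]
      calc m = Real.sqrt (m^2) := by rw [Real.sqrt_sq hm0]
        _ ≤ _ := Real.sqrt_le_sqrt h1
  have huniq : frobNorm e * sinθ = m := hθ.unique hleast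
  -- frobNorm e
  set K : ℝ := A^2 + B^2 - 2*C^2 with hK
  have hKval : ∑ i, ∑ j, (e i j)^2 = K := by
    rw [he]
    simpa using Stmt8Aux.enorm_sq (fun i => x i) (fun i => z i)
  have hKnonneg : 0 ≤ K := by
    rw [← hKval]; positivity
  have hKpos : 0 < K := by
    rcases lt_or_eq_of_le hKnonneg with h | h
    · exact h
    · exfalso
      apply hene
      have hsum : ∑ i, ∑ j, (e i j)^2 = 0 := by rw [hKval, ← h]
      have : ∀ i ∈ Finset.univ, ∑ j, (e i j)^2 = 0 := by
        intro i _
        have := (Finset.sum_eq_zero_iff_of_nonneg (fun i _ => by positivity)).mp hsum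
        exact this i (Finset.mem_univ i)
      ext i j
      have := (Finset.sum_eq_zero_iff_of_nonneg (fun j _ => by positivity)).mp
        (this i (Finset.mem_univ i)) j (Finset.mem_univ j)
      simpa using pow_eq_zero_iff (n := 2) (by norm_num) |>.mp this
  have hfe : frobNorm e = Real.sqrt K := by rw [frobNorm, hKval]
  have hsqrtKpos : 0 < Real.sqrt K := Real.sqrt_pos.mpr hKpos
  clear_value A B C
  have hA0 : A ≠ 0 := ne_of_gt hApos
  have hB0 : B ≠ 0 := ne_of_gt hBpos
  have hsin : Real.sin φ ^ 2 = (A*B - C^2)/(A*B) := by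
    have hcos : Real.cos φ = C / (‖x‖ * ‖z‖) := by
      rw [hφ, InnerProductGeometry.cos_angle, hCinner]
    rw [Real.sin_sq, hcos, div_pow, mul_pow, hxA, hzB]
    field_simp
  have hrho : ρ^2 = A/B := by
    rw [hρ, div_pow, hxA, hzB]
  -- denominator identity
  have hden : (ρ ^ 2 - 1) ^ 2 + 2 * ρ ^ 2 * Real.sin φ ^ 2 = K / B^2 := by
    rw [hrho, hsin, hK]
    field_simp
    ring
  have hsK0 : Real.sqrt K ≠ 0 := ne_of_gt hsqrtKpos
  have hsθ : sinθ = m / Real.sqrt K := by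
    rw [eq_div_iff hsK0, mul_comm, ← hfe]
    exact huniq
  rw [hsθ, hden, hsin, Real.sqrt_div hKnonneg, Real.sqrt_sq (le_of_lt hBpos), hm]
  field_simp
end
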